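/- Let (M,d) be a metric space and X a Banach space. Let α ≥ 0 and let φ : M ⇉ X be a correspondence that is non-empty-valued, closed-valued, and convex-valued, and that admits local strongly pointwise α-Lipschitz selections. If φ has a continuous selection, then for every β > α there exist a continuous selection f : M → X of φ and a set B ⊆ M that is dense in M such that f is pointwise β-Lipschitz at every point of B. -/

import Mathlib

open Filter Metric Set

/-- `f` is pointwise `α`-Lipschitz at `b`:
`limsup_{r→0⁺} ( r⁻¹ · sup { d(f b, f a) : a ∈ closedBall b r } ) ≤ α`. -/
noncomputable def PtwiseLipschitzAt {M X : Type*} [PseudoMetricSpace M] [PseudoMetricSpace X]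
    (f : M → X) (α : ℝ) (b : M) : Prop :=
  Filter.limsup
    (fun r : ℝ => (ENNReal.ofReal r)⁻¹ * ⨆ a ∈ Metric.closedBall b r, edist (f b) (f a))
    (nhdsWithin 0 (Set.Ioi 0)) ≤ ENNReal.ofReal α

/-- `φ` admits local strongly pointwise `α`-Lipschitz selections. -/
def AdmitsLocalStronglyPtwiseLipschitzSelections {M X : Type*} [MetricSpace M]
    [NormedAddCommGroup X] (φ : M → Set X) (α : ℝ) : Prop :=
  ∀ b : M, ∀ y ∈ φ b, ∃ U : Set M, IsOpen U ∧ b ∈ U ∧ ∃ f : M → X,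
    Continuous f ∧ (∀ a, f a ∈ φ a) ∧ f b = y ∧ ∀ a ∈ U, ‖f b - f a‖ ≤ α * dist b a

lemma exists_maximal_separated {M : Type*} [MetricSpace M] (c : ℝ) (hc : 0 < c) :
    ∃ S : Set M, (∀ x ∈ S, ∀ y ∈ S, x ≠ y → c ≤ dist x y) ∧ ∀ x : M, ∃ b ∈ S, dist x b < c := by
  have hub : ∀ ch ⊆ {S : Set M | ∀ x ∈ S, ∀ y ∈ S, x ≠ y → c ≤ dist x y},
      IsChain (· ⊆ ·) ch → ∃ ub ∈ {S : Set M | ∀ x ∈ S, ∀ y ∈ S, x ≠ y → c ≤ dist x y},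
      ∀ s ∈ ch, s ⊆ ub := by
    intro ch hch hchain
    refine ⟨⋃₀ ch, ?_, fun s hs => subset_sUnion_of_mem hs⟩
    rintro x ⟨s, hs, hxs⟩ y ⟨t, ht, hyt⟩ hxy
    rcases hchain.total hs ht with hst | hts
    · exact hch ht x (hst hxs) y hyt hxy
    · exact hch hs x hxs y (hts hyt) hxy
  
  
  obtain ⟨S, hS⟩ := zorn_subset {S : Set M | ∀ x ∈ S, ∀ y ∈ S, x ≠ y → c ≤ dist x y} hub
  refine ⟨S, hS.prop, fun x => ?_⟩
  by_contra h
  push_neg at h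
  have hx : x ∉ S := by
    intro hx
    have := h x hx
    simp at this
    exact absurd this (not_le.mpr hc)
  have hmem : insert x S ∈ {S : Set M | ∀ x ∈ S, ∀ y ∈ S, x ≠ y → c ≤ dist x y} := by
    intro a ha b hb hab
    rcases ha with rfl | ha
    · rcases hb with rfl | hb
      · exact absurd rfl hab
      · exact h b hb
    · rcases hb with rfl | hb
      · rw [dist_comm]; exact h a ha
      · exact hS.prop a ha b hb hab
  have := hS.eq_of_subset hmem (subset_insert x S)
  exact hx (this ▸ mem_insert x S)

lemma separated_isClosed {M : Type*} [MetricSpace M] {c : ℝ} (hc : 0 < c) {S : Set M}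
    (h : ∀ x ∈ S, ∀ y ∈ S, x ≠ y → c ≤ dist x y) : IsClosed S := by
  rw [← closure_subset_iff_isClosed]
  intro x hx
  rw [Metric.mem_closure_iff] at hx
  obtain ⟨b, hb, hxb⟩ := hx (c / 2) (by linarith)
  rcases eq_or_ne (dist x b) 0 with h0 | h0
  · rwa [dist_eq_zero.mp h0]
  · obtain ⟨y, hy, hxy⟩ := hx (min (c / 2) (dist x b))
      (lt_min (by linarith) (lt_of_le_of_ne dist_nonneg (Ne.symm h0)))
    have hyb : y ≠ b := by
      intro hyb
      exact absurd (hxy.trans_le (min_le_right _ _)) (by simp [hyb])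
    have := h b hb y hy (Ne.symm hyb)
    have h1 : dist x y < c / 2 := hxy.trans_le (min_le_left _ _)
    have : dist b y ≤ dist b x + dist x y := dist_triangle _ _ _
    rw [dist_comm b x] at this
    linarith [h b hb y hy (Ne.symm hyb)]

lemma ptwise_of_local {M X : Type*} [PseudoMetricSpace M] [PseudoMetricSpace X]
    (f : M → X) (β : ℝ) (hβ0 : 0 ≤ β) (b : M) (ρ : ℝ) (hρ : 0 < ρ)
    (h : ∀ a, dist a b < ρ → dist (f b) (f a) ≤ β * dist b a) : PtwiseLipschitzAt f β b := by
  refine Filter.limsup_le_of_le Filter.isCobounded_le_of_bot ?_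
  filter_upwards [Ioo_mem_nhdsGT_of_mem (show (0:ℝ) ∈ Ico 0 ρ from ⟨le_refl _, hρ⟩)]
  intro r hr
  have hr0 : 0 < r := hr.1
  have hiSup : (⨆ a ∈ Metric.closedBall b r, edist (f b) (f a)) ≤ ENNReal.ofReal (β * r) := by
    refine iSup₂_le fun a ha => ?_
    rw [mem_closedBall] at ha
    have h1 : dist (f b) (f a) ≤ β * dist b a := h a (ha.trans_lt hr.2)
    rw [edist_dist]
    refine ENNReal.ofReal_le_ofReal (h1.trans ?_)
    rw [dist_comm]
    exact mul_le_mul_of_nonneg_left ha hβ0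
  calc (ENNReal.ofReal r)⁻¹ * ⨆ a ∈ Metric.closedBall b r, edist (f b) (f a)
      ≤ (ENNReal.ofReal r)⁻¹ * ENNReal.ofReal (β * r) := by gcongr
    _ = ENNReal.ofReal β := by
        rw [ENNReal.ofReal_mul hβ0, mul_comm (ENNReal.ofReal β), ← mul_assoc,
          ENNReal.inv_mul_cancel (by simp [hr0]) ENNReal.ofReal_ne_top, one_mul]

lemma stage {M X : Type*} [MetricSpace M] [NormedAddCommGroup X] [NormedSpace ℝ X]
    (α β : ℝ) (hα : 0 ≤ α) (hβ : α < β) (φ : M → Set X)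
    (hcv : ∀ a, Convex ℝ (φ a))
    (hloc : AdmitsLocalStronglyPtwiseLipschitzSelections φ α)
    (D : ℕ → Set M)
    (hsep : ∀ n, ∀ x ∈ D n, ∀ y ∈ D n, x ≠ y → (1/2:ℝ)^n ≤ dist x y)
    (n : ℕ) (g : M → X) (hgc : Continuous g) (hgs : ∀ a, g a ∈ φ a) :
    ∃ g' : M → X, Continuous g' ∧ (∀ a, g' a ∈ φ a) ∧
      (∀ x, ‖g' x - g x‖ ≤ (1/2:ℝ)^n) ∧
      (∀ b, (∃ k ≤ n, b ∈ D k) → g' b = g b) ∧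
      (∀ b, (∃ k < n, b ∈ D k) → ∀ x, ‖g' x - g x‖ ≤ (β - α) * (1/2:ℝ)^n * dist x b) ∧
      (∀ b ∈ D n, (∀ k < n, b ∉ D k) → ∃ ρ > 0, ∀ a, dist a b < ρ →
        ‖g' b - g' a‖ ≤ α * dist b a) := by
  set c : ℝ := (1/2:ℝ)^n with hc_def
  have hc : 0 < c := by positivity
  set S : Set M := {b | b ∈ D n ∧ ∀ k < n, b ∉ D k} with hS_def
  -- choose separation radii
  have hrex : ∀ b : M, ∃ r : ℝ, 0 < r ∧ (b ∈ S →
      4 * r ≤ c ∧ ∀ y, (∃ k ≤ n, y ∈ D k) → y ≠ b → 4 * r ≤ dist b y) := by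
    intro b
    by_cases hb : b ∈ S
    · have hE : IsClosed (⋃ k ∈ Finset.range n, D k) :=
        isClosed_biUnion_finset fun k _ => separated_isClosed (by positivity : (0:ℝ) < (1/2:ℝ)^k)
          (hsep k)
      have hbE : b ∉ ⋃ k ∈ Finset.range n, D k := by
        simp only [mem_iUnion, Finset.mem_range, not_exists]
        intro k hk hbk
        exact hb.2 k hk hbk
      obtain ⟨t1, ht1, hball⟩ := Metric.isOpen_iff.mp hE.isOpen_compl b hbE
      refine ⟨min t1 c / 4, by positivity, fun _ => ⟨?_, ?_⟩⟩
      · have : min t1 c ≤ c := min_le_right _ _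
        linarith
      rintro y ⟨k, hk, hyk⟩ hyb
      rcases lt_or_eq_of_le hk with hk' | rfl
      · have hyE : y ∈ ⋃ k ∈ Finset.range n, D k := by
          simp only [mem_iUnion, Finset.mem_range]
          exact ⟨k, hk', hyk⟩
        have : ¬ (dist b y < t1) := by
          intro hlt
          have : y ∈ ball b t1 := by rwa [mem_ball, dist_comm]
          exact (hball this) hyE
        have h1 : t1 ≤ dist b y := not_lt.mp this
        have : min t1 c ≤ t1 := min_le_left _ _
        linarith
      · have h1 : c ≤ dist b y := by
          rw [dist_comm]; exact hsep _ y hyk b hb.1 hyb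
        have : min t1 c ≤ c := min_le_right _ _
        linarith
    · exact ⟨1, one_pos, fun h => absurd h hb⟩
  choose r hr0 hr using hrex
  set ε : M → ℝ := fun b => min ((β - α) * c * r b) c with hε_def
  have hεpos : ∀ b, 0 < ε b := fun b => lt_min
    (mul_pos (mul_pos (sub_pos.mpr hβ) hc) (hr0 b)) hc
  -- choose patches
  have hpex : ∀ b : M, ∃ (hf : M → X) (d : ℝ), b ∈ S →
      (0 < d ∧ d ≤ r b ∧ Continuous hf ∧ (∀ a, hf a ∈ φ a) ∧ hf b = g b ∧
       (∀ a, dist a b ≤ d → ‖hf b - hf a‖ ≤ α * dist b a) ∧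
       (∀ a, dist a b ≤ d → ‖hf a - g a‖ ≤ ε b)) := by
    intro b
    by_cases hb : b ∈ S
    · obtain ⟨U, hU, hbU, h, hhc, hhs, hhb, hhlip⟩ := hloc b (g b) (hgs b)
      set V : Set M := {x | ‖h x - g x‖ < ε b} with hV_def
      have hVopen : IsOpen V := by
        have : Continuous fun x => ‖h x - g x‖ := (hhc.sub hgc).norm
        exact isOpen_lt this continuous_const
      have hbV : b ∈ V := by
        simp only [hV_def, mem_setOf_eq, hhb, sub_self, norm_zero]
        exact hεpos b
      obtain ⟨δ', hδ', hball⟩ := Metric.isOpen_iff.mp (hU.inter hVopen) b ⟨hbU, hbV⟩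
      refine ⟨h, min (δ' / 2) (r b), fun _ => ⟨lt_min (by linarith) (hr0 b), min_le_right _ _,
        hhc, hhs, hhb, ?_, ?_⟩⟩
      · intro a ha
        have hmem : a ∈ ball b δ' := by
          rw [mem_ball]
          have h2 : min (δ' / 2) (r b) ≤ δ' / 2 := min_le_left _ _
          have ha' : dist a b ≤ min (δ' / 2) (r b) := ha
          linarith
        exact hhlip a (hball hmem).1
      · intro a ha
        have hmem : a ∈ ball b δ' := by
          rw [mem_ball]
          have h2 : min (δ' / 2) (r b) ≤ δ' / 2 := min_le_left _ _
          have ha' : dist a b ≤ min (δ' / 2) (r b) := ha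
          linarith
        exact le_of_lt (hball hmem).2
    · exact ⟨g, 1, fun h => absurd h hb⟩
  choose h δ hp using hpex
  have hδc : ∀ b ∈ S, δ b ≤ c / 4 := by
    intro b hb
    have h1 := (hp b hb).2.1
    have h2 := (hr b hb).1
    have := hr0 b
    linarith
  have huniq : ∀ b ∈ S, ∀ b' ∈ S, ∀ x : M, dist x b < δ b → dist x b' < δ b' → b = b' := by
    intro b hb b' hb' x h1 h2
    by_contra hne
    have hsep' : c ≤ dist b b' := hsep n b hb.1 b' hb'.1 hne
    have := hδc b hb
    have := hδc b' hb'
    have : dist b b' ≤ dist b x + dist x b' := dist_triangle _ _ _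
    rw [dist_comm b x] at this
    linarith
  set lam : M → M → ℝ := fun b x => min 1 (max 0 (2 - 2 * dist x b / δ b)) with hlam_def
  have hlam01 : ∀ b x, 0 ≤ lam b x ∧ lam b x ≤ 1 := fun b x =>
    ⟨le_min zero_le_one (le_max_left _ _), min_le_left _ _⟩
  have hδr : ∀ b ∈ S, δ b ≤ r b := fun b hb => (hp b hb).2.1
  have hδpos : ∀ b ∈ S, 0 < δ b := fun b hb => (hp b hb).1
  have hlam1 : ∀ b ∈ S, ∀ x, dist x b ≤ δ b / 2 → lam b x = 1 := by
    intro b hb x hx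
    have hd := hδpos b hb
    have h1 : 2 * dist x b / δ b ≤ 1 := by
      rw [div_le_one hd]; linarith
    have h2 : (1:ℝ) ≤ 2 - 2 * dist x b / δ b := by linarith
    simp only [hlam_def]
    exact min_eq_left (le_max_of_le_right h2)
  have hlam0 : ∀ b ∈ S, ∀ x, δ b ≤ dist x b → lam b x = 0 := by
    intro b hb x hx
    have hd := hδpos b hb
    have h1 : (2:ℝ) ≤ 2 * dist x b / δ b := by
      rw [le_div_iff₀ hd]; linarith
    have h2 : 2 - 2 * dist x b / δ b ≤ 0 := by linarith
    simp only [hlam_def]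
    rw [max_eq_left h2]
    exact min_eq_right zero_le_one
  have hlamcont : ∀ b, Continuous (fun x => lam b x) := by
    intro b
    apply continuous_const.min
    apply continuous_const.max
    exact continuous_const.sub ((continuous_const.mul (continuous_id.dist continuous_const)).div_const _)
  set G : M → M → X := fun b x => (1 - lam b x) • g x + lam b x • h b x with hG_def
  have hGcont : ∀ b ∈ S, Continuous (G b) := fun b hb =>
    ((continuous_const.sub (hlamcont b)).smul hgc).add ((hlamcont b).smul (hp b hb).2.2.1)
  have hGsel : ∀ b ∈ S, ∀ x, G b x ∈ φ x := fun b hb x =>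
    hcv x (hgs x) ((hp b hb).2.2.2.1 x) (sub_nonneg.mpr (hlam01 b x).2) (hlam01 b x).1
      (by ring)
  have hGsub : ∀ b x, G b x - g x = lam b x • (h b x - g x) := by
    intro b x
    simp only [hG_def]
    rw [sub_smul, one_smul, smul_sub]
    abel
  have hGb : ∀ b ∈ S, G b b = g b := by
    intro b hb
    have h1 : lam b b = 1 := hlam1 b hb b (by
      rw [dist_self]; linarith [hδpos b hb])
    simp only [hG_def, h1, sub_self, zero_smul, one_smul, zero_add]
    exact (hp b hb).2.2.2.2.1
  classical
  set g' : M → X := fun x => if hx : ∃ b, b ∈ S ∧ dist x b < δ b then G hx.choose x else g x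
    with hg'_def
  have hcases : ∀ x, ((∀ b ∈ S, δ b ≤ dist x b) ∧ g' x = g x) ∨
      (∃ b ∈ S, dist x b < δ b ∧ g' x = G b x) := by
    intro x
    by_cases hx : ∃ b, b ∈ S ∧ dist x b < δ b
    · right
      exact ⟨hx.choose, hx.choose_spec.1, hx.choose_spec.2, by
        simp only [hg'_def]; rw [dif_pos hx]⟩
    · left
      have hx' := hx
      push_neg at hx
      exact ⟨fun b hb => hx b hb, by simp only [hg'_def]; rw [dif_neg hx']⟩
  have hKey : ∀ b ∈ S, ∀ x, dist x b < c / 2 → g' x = G b x := by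
    intro b hb x hx
    rcases hcases x with ⟨hno, hgx⟩ | ⟨b₁, hb₁, hd₁, hGx⟩
    · rw [hgx]
      have h0 : lam b x = 0 := hlam0 b hb x (hno b hb)
      simp [hG_def, h0]
    · have hbb : b₁ = b := by
        by_contra hne
        have hs1 : c ≤ dist b₁ b := hsep n b₁ hb₁.1 b hb.1 hne
        have hd2 := hδc b₁ hb₁
        have htri : dist b₁ b ≤ dist b₁ x + dist x b := dist_triangle _ _ _
        rw [dist_comm b₁ x] at htri
        linarith
      rw [hGx, hbb]
  have hg'cont : Continuous g' := by
    rw [continuous_iff_continuousAt]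
    intro x₀
    by_cases hx₀ : ∃ b ∈ S, dist x₀ b < c / 2
    · obtain ⟨b, hb, hd⟩ := hx₀
      have heq : g' =ᶠ[nhds x₀] G b := by
        filter_upwards [Metric.ball_mem_nhds x₀ (show (0:ℝ) < c / 2 - dist x₀ b by linarith)]
          with x hx
        rw [mem_ball] at hx
        apply hKey b hb
        have htri : dist x b ≤ dist x x₀ + dist x₀ b := dist_triangle _ _ _
        linarith
      exact ContinuousAt.congr (hGcont b hb).continuousAt heq.symm
    · push_neg at hx₀
      have heq : g' =ᶠ[nhds x₀] g := by
        filter_upwards [Metric.ball_mem_nhds x₀ (show (0:ℝ) < c / 4 by linarith)] with x hx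
        rw [mem_ball] at hx
        rcases hcases x with ⟨_, h1⟩ | ⟨b₁, hb₁, hd₁, hGx⟩
        · exact h1
        · exfalso
          have hd2 := hδc b₁ hb₁
          have htri : dist x₀ b₁ ≤ dist x₀ x + dist x b₁ := dist_triangle _ _ _
          rw [dist_comm x₀ x] at htri
          have := hx₀ b₁ hb₁
          linarith
      exact ContinuousAt.congr hgc.continuousAt heq.symm
  have hg'sel : ∀ a, g' a ∈ φ a := by
    intro a
    rcases hcases a with ⟨_, h1⟩ | ⟨b₁, hb₁, _, hGx⟩
    · rw [h1]; exact hgs a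
    · rw [hGx]; exact hGsel b₁ hb₁ a
  have hclose : ∀ x, ∀ b ∈ S, dist x b ≤ δ b → ‖G b x - g x‖ ≤ ε b := by
    intro x b hb hd
    rw [hGsub]
    rw [norm_smul, Real.norm_eq_abs, abs_of_nonneg (hlam01 b x).1]
    have h1 : ‖h b x - g x‖ ≤ ε b := (hp b hb).2.2.2.2.2.2 x hd
    have h2 := (hlam01 b x).1
    have h3 := (hlam01 b x).2
    nlinarith [norm_nonneg (h b x - g x), le_of_lt (hεpos b)]
  refine ⟨g', hg'cont, hg'sel, ?_, ?_, ?_, ?_⟩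
  · -- (A)
    intro x
    rcases hcases x with ⟨_, h1⟩ | ⟨b₁, hb₁, hd₁, hGx⟩
    · rw [h1]; simp [le_of_lt hc]
    · rw [hGx]
      exact (hclose x b₁ hb₁ (le_of_lt hd₁)).trans (min_le_right _ _)
  · -- (B)
    rintro b₀ ⟨k, hk, hbk⟩
    rcases hcases b₀ with ⟨_, h1⟩ | ⟨b₁, hb₁, hd₁, hGx⟩
    · exact h1
    · by_cases hbb : b₀ = b₁
      · rw [hGx, ← hbb, hbb, hGb b₁ hb₁, ← hbb]
      · exfalso
        have h4 : 4 * r b₁ ≤ dist b₁ b₀ := (hr b₁ hb₁).2 b₀ ⟨k, hk, hbk⟩ hbb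
        rw [dist_comm b₁ b₀] at h4
        have h5 : δ b₁ ≤ r b₁ := hδr b₁ hb₁
        have := hr0 b₁
        linarith
  · -- (C)
    rintro b₀ ⟨k, hk, hbk⟩ x
    rcases hcases x with ⟨_, h1⟩ | ⟨b₁, hb₁, hd₁, hGx⟩
    · rw [h1]
      simp only [sub_self, norm_zero]
      have : (0:ℝ) ≤ β - α := by linarith
      positivity
    · have hbb : b₀ ≠ b₁ := by
        intro hh
        exact (hb₁.2 k hk) (hh ▸ hbk)
      have h4 : 4 * r b₁ ≤ dist b₁ b₀ := (hr b₁ hb₁).2 b₀ ⟨k, le_of_lt hk, hbk⟩ hbb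
      have h5 : δ b₁ ≤ r b₁ := hδr b₁ hb₁
      have h6 : r b₁ ≤ dist x b₀ := by
        have htri : dist b₁ b₀ ≤ dist b₁ x + dist x b₀ := dist_triangle _ _ _
        rw [dist_comm b₁ x] at htri
        linarith [hr0 b₁]
      have h7 : ‖g' x - g x‖ ≤ ε b₁ := hGx ▸ hclose x b₁ hb₁ (le_of_lt hd₁)
      have h8 : ε b₁ ≤ (β - α) * c * r b₁ := min_le_left _ _
      have h9 : (β - α) * c * r b₁ ≤ (β - α) * c * dist x b₀ := by
        have : (0:ℝ) ≤ (β - α) * c := by nlinarith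
        nlinarith
      calc ‖g' x - g x‖ ≤ ε b₁ := h7
        _ ≤ (β - α) * c * r b₁ := h8
        _ ≤ (β - α) * c * dist x b₀ := h9
  · -- (D)
    intro b hbn hnb
    have hb : b ∈ S := ⟨hbn, hnb⟩
    refine ⟨δ b / 2, by linarith [hδpos b hb], ?_⟩
    intro a ha
    have hd2 := hδc b hb
    have hga : g' a = G b a := hKey b hb a (by linarith)
    have hgb : g' b = G b b := hKey b hb b (by
      rw [dist_self]; linarith)
    have hlama : lam b a = 1 := hlam1 b hb a (le_of_lt ha)
    have hGa : G b a = h b a := by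
      simp [hG_def, hlama]
    have hGbb : G b b = h b b := by
      have h1 : lam b b = 1 := hlam1 b hb b (by rw [dist_self]; linarith [hδpos b hb])
      simp [hG_def, h1]
    rw [hga, hgb, hGa, hGbb]
    exact (hp b hb).2.2.2.2.2.1 a (by linarith [hδpos b hb])

/-- **Pointwise Lipschitz Selection Theorem.** -/
theorem stmt0 {M X : Type*} [MetricSpace M] [NormedAddCommGroup X] [NormedSpace ℝ X]
    [CompleteSpace X] (α : ℝ) (hα : 0 ≤ α) (φ : M → Set X)
    (hne : ∀ a, (φ a).Nonempty) (hcl : ∀ a, IsClosed (φ a)) (hcv : ∀ a, Convex ℝ (φ a))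
    (hloc : AdmitsLocalStronglyPtwiseLipschitzSelections φ α)
    (hsel : ∃ g : M → X, Continuous g ∧ ∀ a, g a ∈ φ a)
    (β : ℝ) (hβ : α < β) :
    ∃ f : M → X, Continuous f ∧ (∀ a, f a ∈ φ a) ∧
      ∃ B : Set M, Dense B ∧ ∀ b ∈ B, PtwiseLipschitzAt f β b := by
  classical
  obtain ⟨g₀, hg₀c, hg₀s⟩ := hsel
  have hD : ∀ n : ℕ, ∃ S : Set M, (∀ x ∈ S, ∀ y ∈ S, x ≠ y → (1/2:ℝ)^n ≤ dist x y) ∧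
      ∀ x : M, ∃ b ∈ S, dist x b < (1/2:ℝ)^n :=
    fun n => exists_maximal_separated _ (by positivity)
  choose D hsep hdense using hD
  have hstage := stage α β hα hβ φ hcv hloc D hsep
  have hstep : ∀ (n : ℕ) (t : {g : M → X // Continuous g ∧ ∀ a, g a ∈ φ a}),
      ∃ t' : {g : M → X // Continuous g ∧ ∀ a, g a ∈ φ a},
      (∀ x, ‖t'.1 x - t.1 x‖ ≤ (1/2:ℝ)^n) ∧
      (∀ b, (∃ k ≤ n, b ∈ D k) → t'.1 b = t.1 b) ∧
      (∀ b, (∃ k < n, b ∈ D k) → ∀ x, ‖t'.1 x - t.1 x‖ ≤ (β - α) * (1/2:ℝ)^n * dist x b) ∧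
      (∀ b ∈ D n, (∀ k < n, b ∉ D k) → ∃ ρ > 0, ∀ a, dist a b < ρ →
        ‖t'.1 b - t'.1 a‖ ≤ α * dist b a) := by
    intro n t
    obtain ⟨g', h1, h2, h3, h4, h5, h6⟩ := hstage n t.1 t.2.1 t.2.2
    exact ⟨⟨g', h1, h2⟩, h3, h4, h5, h6⟩
  choose step hstepA hstepB hstepC hstepD using hstep
  set Fs : ℕ → {g : M → X // Continuous g ∧ ∀ a, g a ∈ φ a} :=
    fun n => Nat.rec ⟨g₀, hg₀c, hg₀s⟩ (fun n t => step n t) n with hFs_def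
  set F : ℕ → M → X := fun n => (Fs n).1 with hF_def
  have hFsucc : ∀ n, Fs (n + 1) = step n (Fs n) := fun n => rfl
  have hFc : ∀ n, Continuous (F n) := fun n => (Fs n).2.1
  have hFsel : ∀ n a, F n a ∈ φ a := fun n a => (Fs n).2.2 a
  have hA : ∀ n x, ‖F (n+1) x - F n x‖ ≤ (1/2:ℝ)^n := fun n x => hstepA n (Fs n) x
  have hB : ∀ n b, (∃ k ≤ n, b ∈ D k) → F (n+1) b = F n b := fun n => hstepB n (Fs n)
  have hC : ∀ n b, (∃ k < n, b ∈ D k) → ∀ x,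
      ‖F (n+1) x - F n x‖ ≤ (β - α) * (1/2:ℝ)^n * dist x b := fun n => hstepC n (Fs n)
  have hDD : ∀ n, ∀ b ∈ D n, (∀ k < n, b ∉ D k) → ∃ ρ > 0, ∀ a, dist a b < ρ →
      ‖F (n+1) b - F (n+1) a‖ ≤ α * dist b a := fun n => hstepD n (Fs n)
  -- telescoping
  have htel : ∀ (x : M) (m : ℕ) (cseq : ℕ → ℝ),
      (∀ i, m ≤ i → ‖F (i+1) x - F i x‖ ≤ cseq i) →
      ∀ N, m ≤ N → ‖F N x - F m x‖ ≤ ∑ i ∈ Finset.Ico m N, cseq i := by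
    intro x m cseq hcs N
    induction N with
    | zero =>
      intro hN
      interval_cases m
      simp
    | succ N ih =>
      intro hN
      rcases eq_or_lt_of_le hN with hEq | hlt
      · rw [← hEq]
        simp
      · have hmN : m ≤ N := Nat.lt_succ_iff.mp hlt
        have h1 : ‖F (N+1) x - F m x‖ ≤ ‖F (N+1) x - F N x‖ + ‖F N x - F m x‖ := by
          have : F (N+1) x - F m x = (F (N+1) x - F N x) + (F N x - F m x) := by abel
          rw [this]
          exact norm_add_le _ _
        rw [Finset.sum_Ico_succ_top hmN]
        have h2 := hcs N hmN
        have h3 := ih hmN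
        linarith
  have hgeo : ∀ m N : ℕ, ∑ i ∈ Finset.Ico m N, (1/2:ℝ)^i ≤ (1/2:ℝ)^m * 2 := by
    intro m N
    rcases le_or_gt m N with hmN | hmN
    · rw [Finset.sum_Ico_eq_sum_range]
      have : ∀ i, (1/2:ℝ)^(m + i) = (1/2:ℝ)^m * (1/2:ℝ)^i := fun i => pow_add _ _ _
      rw [Finset.sum_congr rfl fun i _ => this i, ← Finset.mul_sum]
      have h2 := sum_geometric_two_le (N - m)
      have h3 : (0:ℝ) ≤ (1/2:ℝ)^m := by positivity
      nlinarith
    · rw [Finset.Ico_eq_empty (by omega)]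
      simp only [Finset.sum_empty]
      positivity
  -- limit
  have hcauchy : ∀ x, CauchySeq (fun n => F n x) := by
    intro x
    apply cauchySeq_of_le_geometric (1/2 : ℝ) 1 (by norm_num)
    intro n
    rw [dist_eq_norm, norm_sub_rev, one_mul]
    exact hA n x
  have hlim : ∀ x, ∃ l, Tendsto (fun n => F n x) atTop (nhds l) :=
    fun x => cauchySeq_tendsto_of_complete (hcauchy x)
  choose f hf using hlim
  have hlimbound : ∀ (x : M) (m : ℕ) (cseq : ℕ → ℝ) (Cb : ℝ),
      (∀ i, m ≤ i → ‖F (i+1) x - F i x‖ ≤ cseq i) →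
      (∀ N, ∑ i ∈ Finset.Ico m N, cseq i ≤ Cb) → ‖f x - F m x‖ ≤ Cb := by
    intro x m cseq Cb hcs hCb
    have h1 : Tendsto (fun N => ‖F N x - F m x‖) atTop (nhds ‖f x - F m x‖) :=
      ((hf x).sub_const _).norm
    apply le_of_tendsto h1
    filter_upwards [eventually_ge_atTop m] with N hN
    exact (htel x m cseq hcs N hN).trans (hCb N)
  have hunif : ∀ x m, ‖f x - F m x‖ ≤ (1/2:ℝ)^m * 2 := by
    intro x m
    exact hlimbound x m (fun i => (1/2:ℝ)^i) _ (fun i _ => hA i x) (fun N => hgeo m N)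
  have hfc : Continuous f := by
    have hTU : TendstoUniformly (fun n x => F n x) f atTop := by
      rw [Metric.tendstoUniformly_iff]
      intro ε hε
      obtain ⟨m, hm⟩ : ∃ m : ℕ, (1/2:ℝ)^m < ε / 2 :=
        exists_pow_lt_of_lt_one (by linarith) (by norm_num)
      filter_upwards [eventually_ge_atTop m] with n hn x
      have h1 : (1/2:ℝ)^n ≤ (1/2:ℝ)^m :=
        pow_le_pow_of_le_one (by norm_num) (by norm_num) hn
      have h2 := hunif x n
      rw [dist_eq_norm]
      calc ‖f x - F n x‖ ≤ (1/2:ℝ)^n * 2 := h2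
        _ ≤ (1/2:ℝ)^m * 2 := by linarith
        _ < ε := by linarith
    exact hTU.continuous (Filter.Eventually.of_forall hFc).frequently
  have hfsel : ∀ a, f a ∈ φ a := fun a =>
    (hcl a).mem_of_tendsto (hf a) (Filter.Eventually.of_forall fun n => hFsel n a)
  refine ⟨f, hfc, hfsel, ⋃ n, D n, ?_, ?_⟩
  · -- dense
    rw [Metric.dense_iff]
    intro x rr hrr
    obtain ⟨m, hm⟩ : ∃ m : ℕ, (1/2:ℝ)^m < rr := exists_pow_lt_of_lt_one hrr (by norm_num)
    obtain ⟨b, hb, hxb⟩ := hdense m x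
    exact ⟨b, by rw [mem_ball, dist_comm]; exact hxb.trans hm, mem_iUnion.mpr ⟨m, hb⟩⟩
  · -- pointwise lipschitz
    intro b hb
    rw [mem_iUnion] at hb
    have hfind : ∃ n, b ∈ D n := hb
    set k := Nat.find hfind with hk_def
    have hbk : b ∈ D k := Nat.find_spec hfind
    have hnot : ∀ j < k, b ∉ D j := fun j hj => Nat.find_min hfind hj
    obtain ⟨ρ, hρ, hlip⟩ := hDD k b hbk hnot
    have hconst : ∀ N, k + 1 ≤ N → F N b = F (k+1) b := by
      intro N
      induction N with
      | zero => omega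
      | succ N ih =>
        intro hN
        rcases eq_or_lt_of_le hN with hEq | hlt
        · rw [hEq]
        · have hkN : k + 1 ≤ N := Nat.lt_succ_iff.mp hlt
          rw [hB N b ⟨k, by omega, hbk⟩]
          exact ih hkN
    have hfb : f b = F (k+1) b := by
      apply tendsto_nhds_unique (hf b)
      apply Tendsto.congr' _ tendsto_const_nhds
      filter_upwards [eventually_ge_atTop (k+1)] with N hN
      exact (hconst N hN).symm
    have hloc' : ∀ a, dist a b < ρ → dist (f b) (f a) ≤ β * dist b a := by
      intro a ha
      have hfa : ‖f a - F (k+1) a‖ ≤ (β - α) * dist a b := by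
        apply hlimbound a (k+1) (fun i => (β - α) * dist a b * (1/2:ℝ)^i)
        · intro i hi
          calc ‖F (i+1) a - F i a‖ ≤ (β - α) * (1/2:ℝ)^i * dist a b :=
                hC i b ⟨k, by omega, hbk⟩ a
            _ = (β - α) * dist a b * (1/2:ℝ)^i := by ring
        · intro N
          rw [← Finset.mul_sum]
          have h1 := hgeo (k+1) N
          have h2 : (0:ℝ) ≤ (β - α) * dist a b := by
            have := dist_nonneg (x := a) (y := b)
            nlinarith
          have h3 : (1/2:ℝ)^(k+1) * 2 ≤ 1 := by
            have : (1/2:ℝ)^(k+1) ≤ (1/2:ℝ)^1 :=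
              pow_le_pow_of_le_one (by norm_num) (by norm_num) (by omega)
            norm_num at this ⊢
            linarith
          calc (β - α) * dist a b * ∑ i ∈ Finset.Ico (k+1) N, (1/2:ℝ)^i
              ≤ (β - α) * dist a b * ((1/2:ℝ)^(k+1) * 2) := by
                apply mul_le_mul_of_nonneg_left h1 h2
            _ ≤ (β - α) * dist a b * 1 := mul_le_mul_of_nonneg_left h3 h2
            _ = (β - α) * dist a b := by ring
      have h4 : ‖F (k+1) b - F (k+1) a‖ ≤ α * dist b a := hlip a ha
      rw [dist_eq_norm]
      have h5 : f b - f a = (F (k+1) b - F (k+1) a) + (F (k+1) a - f a) := by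
        rw [hfb]; abel
      calc ‖f b - f a‖ ≤ ‖F (k+1) b - F (k+1) a‖ + ‖F (k+1) a - f a‖ := by
            rw [h5]; exact norm_add_le _ _
        _ ≤ α * dist b a + (β - α) * dist a b := by
            rw [norm_sub_rev] at hfa
            exact add_le_add h4 hfa
        _ = β * dist b a := by rw [dist_comm a b]; ring
    exact ptwise_of_local f β (by linarith) b ρ hρ hloc'
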